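/- If G is a k-vertex-critical digraph on exactly 2k−2 vertices, then k ≥ 2 and G has at least two vertices u with the property that some optimal colouring of G contains {u} as a singleton colour class. -/

import Mathlib

open Finset

/-- A finite vertex subset is acyclic in the digraph with arc relation `E`
if it induces no directed cycle. -/
def DiAcyclic {V : Type*} (E : V → V → Prop) (S : Finset V) : Prop :=
  ∀ v ∈ S, ¬ Relation.TransGen (fun a b => a ∈ S ∧ b ∈ S ∧ E a b) v v

/-- A colouring of a digraph: a partition of the vertex set into acyclic sets. -/
def IsDiColoring {V : Type*} [Fintype V] [DecidableEq V] (E : V → V → Prop)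
    (P : Finpartition (Finset.univ : Finset V)) : Prop :=
  ∀ S ∈ P.parts, DiAcyclic E S

/-- The dichromatic number. -/
noncomputable def dichi (V : Type*) [Fintype V] [DecidableEq V] (E : V → V → Prop) : ℕ :=
  sInf {n | ∃ P : Finpartition (Finset.univ : Finset V), IsDiColoring E P ∧ P.parts.card = n}

/-- Induced subdigraph relation on a vertex subset. -/
def inducedRel {V : Type*} (E : V → V → Prop) (U : Finset V) : ↥U → ↥U → Prop :=
  fun a b => E a.1 b.1

/-- `k`-vertex-critical digraph. -/
def VertexCritical {V : Type*} [Fintype V] [DecidableEq V] (E : V → V → Prop) (k : ℕ) : Prop :=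
  dichi V E = k ∧ ∀ U : Finset V, U ⊂ Finset.univ → dichi ↥U (inducedRel E U) < k

/-- Complement digraph. -/
def diCompl {V : Type*} (E : V → V → Prop) : V → V → Prop :=
  fun a b => a ≠ b ∧ ¬ E a b

/-- Underlying undirected graph of a digraph. -/
def underlying {V : Type*} (E : V → V → Prop) : SimpleGraph V where
  Adj a b := a ≠ b ∧ (E a b ∨ E b a)
  symm := ⟨fun a b ⟨h1, h2⟩ => ⟨h1.symm, h2.symm⟩⟩
  loopless := ⟨fun a ⟨h, _⟩ => h rfl⟩

/-- Number of singleton colour classes. -/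
def numSingle {V : Type*} [Fintype V] [DecidableEq V]
    (P : Finpartition (Finset.univ : Finset V)) : ℕ :=
  (P.parts.filter fun S => S.card = 1).card

/-- Extreme colouring: optimal with fewest singleton classes. -/
def Extreme {V : Type*} [Fintype V] [DecidableEq V] (E : V → V → Prop)
    (P : Finpartition (Finset.univ : Finset V)) : Prop :=
  IsDiColoring E P ∧ P.parts.card = dichi V E ∧
    ∀ Q : Finpartition (Finset.univ : Finset V),
      IsDiColoring E Q → Q.parts.card = dichi V E → numSingle P ≤ numSingle Q

/-- Maximum matching of a simple graph. -/
def IsMaxMatching {V : Type*} (H : SimpleGraph V) (M : H.Subgraph) : Prop :=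
  M.IsMatching ∧ ∀ M' : H.Subgraph, M'.IsMatching → M'.edgeSet.ncard ≤ M.edgeSet.ncard

/-- Matching number. -/
noncomputable def matchNum {V : Type*} (H : SimpleGraph V) : ℕ :=
  sSup {n | ∃ M : H.Subgraph, M.IsMatching ∧ M.edgeSet.ncard = n}

/-- The set `D(H)` of vertices missed by at least one maximum matching. -/
def GED {V : Type*} (H : SimpleGraph V) : Set V :=
  {v | ∃ M : H.Subgraph, IsMaxMatching H M ∧ v ∉ M.verts}

/-- The set `A(H)`. -/
def GEA {V : Type*} (H : SimpleGraph V) : Set V :=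
  {v | v ∉ GED H ∧ ∃ u ∈ GED H, H.Adj v u}

/-- The set `C(H)`. -/
def GEC {V : Type*} (H : SimpleGraph V) : Set V :=
  {v | v ∉ GED H ∧ v ∉ GEA H}

lemma singleton_acyclic' {V : Type*} [DecidableEq V] (E : V → V → Prop)
    (hirr : Irreflexive E) (v : V) : DiAcyclic E ({v} : Finset V) := by
  intro w hw h
  cases h with
  | single h => exact hirr _ h.2.2
  | tail _ h =>
      obtain ⟨hb, hw', hE⟩ := h
      simp only [Finset.mem_singleton] at hb hw'
      subst hb; subst hw'
      exact hirr _ hE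

theorem stmt15 {V : Type*} [Fintype V] [DecidableEq V] (E : V → V → Prop)
    (hirr : Irreflexive E) (k : ℕ) (hcrit : VertexCritical E k)
    (hcard : (Fintype.card V : ℤ) = 2 * (k : ℤ) - 2) :
    2 ≤ k ∧ ∃ u v : V, u ≠ v ∧
      (∃ P : Finpartition (Finset.univ : Finset V),
        IsDiColoring E P ∧ P.parts.card = dichi V E ∧ {u} ∈ P.parts) ∧
      (∃ P : Finpartition (Finset.univ : Finset V),
        IsDiColoring E P ∧ P.parts.card = dichi V E ∧ {v} ∈ P.parts) := by
    classical
  have hne : {n | ∃ P : Finpartition (Finset.univ : Finset V),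
      IsDiColoring E P ∧ P.parts.card = n}.Nonempty := by
    refine ⟨_, ⊥, ?_, rfl⟩
    intro S hS
    rw [Finpartition.mem_bot_iff] at hS
    obtain ⟨a, _, rfl⟩ := hS
    exact singleton_acyclic' E hirr a
  have hk2 : 2 ≤ k := by
    by_contra hk
    push_neg at hk
    interval_cases k
    · omega
    · have hV0 : Fintype.card V = 0 := by omega
      have hempty : (Finset.univ : Finset V) = ∅ := by
        rw [← Finset.card_eq_zero, Finset.card_univ]; exact hV0
      have h0 : dichi V E = 0 := by
        have hm : 0 ∈ {n | ∃ P : Finpartition (Finset.univ : Finset V),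
            IsDiColoring E P ∧ P.parts.card = n} := by
          refine ⟨(Finpartition.empty (Finset V)).copy hempty.symm, ?_, ?_⟩
          · intro S hS
            simp [Finpartition.copy, Finpartition.empty] at hS
          · simp [Finpartition.copy, Finpartition.empty]
        exact Nat.le_zero.mp (Nat.sInf_le hm)
      rw [hcrit.1] at h0
      omega
  have hVcard : (Finset.univ : Finset V).card = 2 * k - 2 := by
    rw [Finset.card_univ]; omega
  obtain ⟨P, hP, hPcard⟩ := Nat.sInf_mem hne
  have hPk : P.parts.card = k := by rw [hPcard]; exact hcrit.1
  set A := P.parts.filter (fun S => S.card = 1) with hAdef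
  set B := P.parts.filter (fun S => ¬ S.card = 1) with hBdef
  have hAB : A.card + B.card = k := by
    rw [hAdef, hBdef, Finset.card_filter_add_card_filter_not, hPk]
  have hsum : ∑ S ∈ P.parts, S.card = 2 * k - 2 := by
    rw [P.sum_card_parts, hVcard]
  have hsplit : ∑ S ∈ A, S.card + ∑ S ∈ B, S.card = 2 * k - 2 := by
    rw [hAdef, hBdef, Finset.sum_filter_add_sum_filter_not, hsum]
  have hsumA : ∑ S ∈ A, S.card = A.card := by
    rw [Finset.sum_congr rfl (fun S hS => (Finset.mem_filter.mp hS).2),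
      Finset.sum_const, smul_eq_mul, mul_one]
  have hsumB : 2 * B.card ≤ ∑ S ∈ B, S.card := by
    rw [mul_comm, ← smul_eq_mul, ← Finset.sum_const]
    refine Finset.sum_le_sum fun S hS => ?_
    obtain ⟨hSp, hS1⟩ := Finset.mem_filter.mp hS
    have hSne : S.Nonempty := Finset.nonempty_iff_ne_empty.mpr
      (fun h => P.ne_bot hSp (by simpa using h))
    have := Finset.Nonempty.card_pos hSne
    omega
  have hA2 : 1 < A.card := by omega
  obtain ⟨S, hSA, T, hTA, hST⟩ := Finset.one_lt_card.mp hA2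
  obtain ⟨hSp, hS1⟩ := Finset.mem_filter.mp hSA
  obtain ⟨hTp, hT1⟩ := Finset.mem_filter.mp hTA
  obtain ⟨u, rfl⟩ := Finset.card_eq_one.mp hS1
  obtain ⟨v, rfl⟩ := Finset.card_eq_one.mp hT1
  refine ⟨hk2, u, v, ?_, ⟨P, hP, hPcard, hSp⟩, ⟨P, hP, hPcard, hTp⟩⟩
  intro h
  exact hST (by rw [h])
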